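/- For every graph U, the graph U is claw-free (contains no induced subgraph isomorphic to K_{1,3}) if and only if its edge-graph S(U) is triangle-free (contains no induced subgraph isomorphic to K_3). -/

import Mathlib

open SimpleGraph

/-- The claw `K_{1,3}`: vertex 0 joined to each of the pairwise
    nonadjacent vertices 1, 2, 3. -/
def claw : SimpleGraph (Fin 4) := SimpleGraph.fromRel (fun a _ => a = 0)

/-- A graph is claw-free if it has no induced subgraph isomorphic to `K_{1,3}`. -/
def ClawFree {V : Type*} (G : SimpleGraph V) : Prop := IsEmpty (claw ↪g G)

/-- The edge-graph `S(U)` of a graph `U`: its vertices are the edges of `U`,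
    two edges `u = {x,y}` and `v = {x,z}` (with `x, y, z` distinct) being
    adjacent iff `{y,z}` is not an edge of `U`. -/
def edgeGraph {V : Type*} (U : SimpleGraph V) : SimpleGraph U.edgeSet :=
  SimpleGraph.fromRel (fun u v => ∃ x y z : V, x ≠ y ∧ x ≠ z ∧ y ≠ z ∧
    (u : Sym2 V) = s(x, y) ∧ (v : Sym2 V) = s(x, z) ∧ ¬ U.Adj y z)


lemma claw_adj (i j : Fin 4) : claw.Adj i j ↔ i ≠ j ∧ (i = 0 ∨ j = 0) := by
  simp [claw, SimpleGraph.fromRel_adj]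

lemma edgeGraph_adj {V : Type*} (U : SimpleGraph V) (e f : U.edgeSet) :
    (edgeGraph U).Adj e f ↔ ∃ x y z : V, x ≠ y ∧ x ≠ z ∧ y ≠ z ∧
      (e : Sym2 V) = s(x, y) ∧ (f : Sym2 V) = s(x, z) ∧ ¬ U.Adj y z := by
  rw [edgeGraph, SimpleGraph.fromRel_adj]
  constructor
  · rintro ⟨hne, h | ⟨x, y, z, hxy, hxz, hyz, hf, he, hadj⟩⟩
    · exact h
    · exact ⟨x, z, y, hxz, hxy, hyz.symm, he, hf, fun h => hadj h.symm⟩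
  · rintro ⟨x, y, z, hxy, hxz, hyz, he, hf, hadj⟩
    refine ⟨?_, Or.inl ⟨x, y, z, hxy, hxz, hyz, he, hf, hadj⟩⟩
    intro hef
    apply hyz
    have : (e : Sym2 V) = (f : Sym2 V) := congrArg _ hef
    rw [he, hf, Sym2.eq_iff] at this
    rcases this with ⟨_, h⟩ | ⟨h1, h2⟩
    · exact h
    · exact (hxz h1).elim

/-- Build a claw embedding from a star configuration. -/
lemma claw_emb {V : Type*} {U : SimpleGraph V} {x a b c : V}
    (hxa : U.Adj x a) (hxb : U.Adj x b) (hxc : U.Adj x c)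
    (hab : a ≠ b) (hac : a ≠ c) (hbc : b ≠ c)
    (nab : ¬ U.Adj a b) (nac : ¬ U.Adj a c) (nbc : ¬ U.Adj b c) :
    Nonempty (claw ↪g U) := by
  refine ⟨⟨⟨![x, a, b, c], ?_⟩, ?_⟩⟩
  · intro i j hij
    fin_cases i <;> fin_cases j <;> simp_all [hxa.ne, hxb.ne, hxc.ne]
  · intro i j
    have nba : ¬ U.Adj b a := fun h => nab (U.adj_symm h)
    have nca : ¬ U.Adj c a := fun h => nac (U.adj_symm h)
    have ncb : ¬ U.Adj c b := fun h => nbc (U.adj_symm h)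
    change U.Adj (![x, a, b, c] i) (![x, a, b, c] j) ↔ claw.Adj i j
    fin_cases i <;> fin_cases j <;>
      simp [claw_adj, hxa, hxb, hxc, hxa.symm, hxb.symm, hxc.symm, nab, nac, nbc, nba, nca, ncb, U.irrefl]

/-- A graph `U` is claw-free iff its edge-graph `S(U)` is triangle-free. -/
theorem clawFree_iff_edgeGraph_triangleFree {V : Type*} [Fintype V] (U : SimpleGraph V) :
    ClawFree U ↔ (edgeGraph U).CliqueFree 3 := by
  classical
  constructor
  · intro h t ht
    rw [SimpleGraph.is3Clique_iff] at ht
    obtain ⟨e1, e2, e3, h12, h13, h23, rfl⟩ := ht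
    have ne23 : e2 ≠ e3 := h23.ne
    obtain ⟨x, y, z, hxy, hxz, hyz, he1, he2, nyz⟩ := (edgeGraph_adj U e1 e2).1 h12
    obtain ⟨x', y', z', hx'y', hx'z', hy'z', he1', he3, ny'z'⟩ := (edgeGraph_adj U e1 e3).1 h13
    obtain ⟨x'', y'', z'', hx''y'', hx''z'', hy''z'', he2', he3', ny''z''⟩ :=
      (edgeGraph_adj U e2 e3).1 h23
    have hadjxy : U.Adj x y := U.mem_edgeSet.1 (he1 ▸ e1.2)
    have hadjxz : U.Adj x z := U.mem_edgeSet.1 (he2 ▸ e2.2)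
    rw [he1, Sym2.eq_iff] at he1'
    rw [he2, Sym2.eq_iff] at he2'
    rcases he1' with ⟨hx, hy⟩ | ⟨hx, hy⟩
    · -- x' = x, y' = y : star case candidate
      subst hx; subst hy
      rcases he2' with ⟨hx2, hy2⟩ | ⟨hx2, hy2⟩
      · subst hx2; subst hy2
        rw [he3, Sym2.eq_iff] at he3'
        rcases he3' with ⟨_, hz⟩ | ⟨hz1, hz2⟩
        · subst hz
          have hadjxz' : U.Adj x z' := U.mem_edgeSet.1 (he3 ▸ e3.2)
          exact h.false (Classical.choice (claw_emb hadjxy hadjxz hadjxz'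
            hyz hy'z' hy''z'' nyz ny'z' ny''z''))
        · exact hx'z' hz2.symm
      · subst hx2; subst hy2
        rw [he3, Sym2.eq_iff] at he3'
        rcases he3' with ⟨hz1, _⟩ | ⟨hz1, hz2⟩
        · exact hxz hz1
        · apply ne23
          apply Subtype.ext
          rw [he2, he3, hz2]
    · -- x' = y, y' = x : will lead to contradiction
      subst hx; subst hy
      rcases he2' with ⟨hx2, hy2⟩ | ⟨hx2, hy2⟩
      · subst hx2; subst hy2
        rw [he3, Sym2.eq_iff] at he3'
        rcases he3' with ⟨hz1, _⟩ | ⟨_, hz2⟩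
        · exact hxy hz1.symm
        · exact hy'z' hz2.symm
      · subst hx2; subst hy2
        rw [he3, Sym2.eq_iff] at he3'
        rcases he3' with ⟨hz1, _⟩ | ⟨hz1, hz2⟩
        · exact hyz hz1
        · exact ny''z'' (hz1 ▸ hadjxy)
  · intro h
    refine ⟨fun g => ?_⟩
    have hxa : U.Adj (g 0) (g 1) := g.map_adj_iff.2 ((claw_adj 0 1).2 ⟨by decide, Or.inl rfl⟩)
    have hxb : U.Adj (g 0) (g 2) := g.map_adj_iff.2 ((claw_adj 0 2).2 ⟨by decide, Or.inl rfl⟩)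
    have hxc : U.Adj (g 0) (g 3) := g.map_adj_iff.2 ((claw_adj 0 3).2 ⟨by decide, Or.inl rfl⟩)
    have nab : ¬ U.Adj (g 1) (g 2) := fun hh => by
      have := g.map_adj_iff.1 hh; rw [claw_adj] at this; revert this; decide
    have nac : ¬ U.Adj (g 1) (g 3) := fun hh => by
      have := g.map_adj_iff.1 hh; rw [claw_adj] at this; revert this; decide
    have nbc : ¬ U.Adj (g 2) (g 3) := fun hh => by
      have := g.map_adj_iff.1 hh; rw [claw_adj] at this; revert this; decide
    have hab : g 1 ≠ g 2 := fun hh => by have := g.injective hh; revert this; decide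
    have hac : g 1 ≠ g 3 := fun hh => by have := g.injective hh; revert this; decide
    have hbc : g 2 ≠ g 3 := fun hh => by have := g.injective hh; revert this; decide
    set e1 : U.edgeSet := ⟨s(g 0, g 1), hxa⟩
    set e2 : U.edgeSet := ⟨s(g 0, g 2), hxb⟩
    set e3 : U.edgeSet := ⟨s(g 0, g 3), hxc⟩
    refine h {e1, e2, e3} (SimpleGraph.is3Clique_triple_iff.2 ⟨?_, ?_, ?_⟩)
    · exact (edgeGraph_adj U e1 e2).2 ⟨g 0, g 1, g 2, hxa.ne, hxb.ne, hab, rfl, rfl, nab⟩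
    · exact (edgeGraph_adj U e1 e3).2 ⟨g 0, g 1, g 3, hxa.ne, hxc.ne, hac, rfl, rfl, nac⟩
    · exact (edgeGraph_adj U e2 e3).2 ⟨g 0, g 2, g 3, hxb.ne, hxc.ne, hbc, rfl, rfl, nbc⟩
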